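/- With Σ₀, commutation, and τ as above: let σ, σ̃ be label-isomorphisms, β, β̃ ⊆ Σ₀ sets of pairwise commuting elements (possibly empty), and s ∈ Σ₀ such that (i) β̃ = β or β̃ = β ∪ {s}, (ii) every element of β commutes with s (or β is empty), and (iii) σ(t) = σ̃(t) for every t ∈ Σ₀ commuting with s. Then τ(σ,β)(t) = τ(σ̃,β̃)(t) for every t ∈ Σ₀ that commutes with s. -/
import Mathlib


/-- The defining property of the permutation `τ₀` which is the product over `s ∈ β` of the
transpositions `(σ(s⁻¹), σ(s)⁻¹)`; then `τ(σ,β) = τ₀ ∘ σ`. -/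
def IsTauProd {S : Type*} (inv : S → S) (σ : S → S) (β : Set S) (τ : Equiv.Perm S) : Prop :=
  (∀ s ∈ β, τ (σ (inv s)) = inv (σ s) ∧ τ (inv (σ s)) = σ (inv s)) ∧
  (∀ x : S, (∀ s ∈ β, x ≠ σ (inv s) ∧ x ≠ inv (σ s)) → τ x = x)

/-- if `β̃ = β` or `β̃ = β ∪ {s}`, all elements of `β` commute with `s`, and
`σ` agrees with `σ̃` on every element commuting with `s`, then `τ(σ,β)` agrees with
`τ(σ̃,β̃)` on every element commuting with `s`. -/
theorem tau_agree_on_commuting {S : Type*} [Fintype S] [DecidableEq S]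
    (inv : S → S) (hinv : ∀ s, inv (inv s) = s) (hfpf : ∀ s, inv s ≠ s)
    (comm : S → S → Prop)
    (hsymm : ∀ s t, comm s t → comm t s) (hirr : ∀ s, ¬ comm s s)
    (hinvcomm : ∀ s, ¬ comm s (inv s))
    (hcompat : ∀ s t, comm s t → comm s (inv t) ∧ comm (inv s) t ∧ comm (inv s) (inv t))
    (σ σ' : S → S) (hσ : Function.Bijective σ) (hσ' : Function.Bijective σ')
    (hσcomm : ∀ s t, comm s t ↔ comm (σ s) (σ t))
    (hσ'comm : ∀ s t, comm s t ↔ comm (σ' s) (σ' t))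
    (β β' : Set S)
    (hβ : ∀ x ∈ β, ∀ y ∈ β, x ≠ y → comm x y)
    (hβ' : ∀ x ∈ β', ∀ y ∈ β', x ≠ y → comm x y)
    (s : S)
    (hββ' : β' = β ∨ β' = β ∪ {s})
    (hβs : ∀ r ∈ β, comm r s)
    (hagree : ∀ t : S, comm t s → σ t = σ' t) :
    ∀ τ τ' : Equiv.Perm S, IsTauProd inv σ β τ → IsTauProd inv σ' β' τ' →
      ∀ t : S, comm t s → τ (σ t) = τ' (σ' t) := by
  intro τ τ' hτ hτ' t ht
  have hts : σ t = σ' t := hagree t ht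
  have hkey : ∀ r ∈ β, σ (inv r) = σ' (inv r) ∧ σ r = σ' r := by
    intro r hr
    have h1 : comm r s := hβs r hr
    have h2 : comm (inv r) s := (hcompat r s h1).2.1
    exact ⟨hagree _ h2, hagree _ h1⟩
  by_cases h : ∃ r ∈ β, σ t = σ (inv r) ∨ σ t = inv (σ r)
  · obtain ⟨r, hr, hc⟩ := h
    have hrβ' : r ∈ β' := by rcases hββ' with h | h <;> simp [h, hr]
    obtain ⟨he1, he2⟩ := hkey r hr
    rcases hc with hc | hc
    · rw [hc, (hτ.1 r hr).1, ← hts, hc, he1, (hτ'.1 r hrβ').1, ← he2]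
    · rw [hc, (hτ.1 r hr).2, ← hts, hc, he2, (hτ'.1 r hrβ').2, ← he1]
  · push_neg at h
    have hfix : τ (σ t) = σ t := hτ.2 _ h
    have hs1 : σ' t ≠ σ' (inv s) := by
      intro he
      have : t = inv s := hσ'.injective he
      exact hinvcomm s (hsymm _ _ (this ▸ ht))
    have hs2 : σ' t ≠ inv (σ' s) := by
      intro he
      have hc : comm (σ' t) (σ' s) := (hσ'comm t s).mp ht
      rw [he] at hc
      exact hinvcomm (σ' s) (hsymm _ _ hc)
    have hfix' : τ' (σ' t) = σ' t := by
      apply hτ'.2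
      intro r hr
      have hrcase : r ∈ β ∨ r = s := by
        rcases hββ' with hb | hb
        · exact Or.inl (hb ▸ hr)
        · rw [hb] at hr
          rcases hr with hr | hr
          · exact Or.inl hr
          · exact Or.inr hr
      rcases hrcase with hr' | hr'
      · obtain ⟨he1, he2⟩ := hkey r hr'
        have := h r hr'
        rw [← hts, ← he1, ← he2]
        exact this
      · subst hr'
        exact ⟨hs1, hs2⟩
    rw [hfix, hfix', hts]
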